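/- For the ISTA iteration on the ℓ1-regularized PageRank objective initialized at q_0 = 0 with s ≥ 0 and ‖s‖_∞ ≥ ρ, the support sets S_k = {i : q_k(i) - ∇_i f(q_k) ≥ ρα d_i^{1/2}} are nested: S_k ⊆ S_{k+1} for all k, and hence |S_k| ≤ |S_{k+1}|. -/

import Mathlib

open Matrix

/-- For the ISTA iteration on the ℓ1-regularized PageRank objective initialized at
`q_0 = 0` with `s ≥ 0` and `‖s‖_∞ ≥ ρ`, the support sets
`S_k = {i : q_k(i) - ∇_i f(q_k) ≥ ρα d_i^{1/2}}` are nested: `S_k ⊆ S_{k+1}` for all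
`k`, and hence `|S_k| ≤ |S_{k+1}|`. -/
theorem ista_support_sets_nested {n : ℕ}
    (A : Matrix (Fin n) (Fin n) ℝ) (hA : A.IsSymm)
    (hAnn : ∀ i j, 0 ≤ A i j) (hAdiag : ∀ i, A i i = 0)
    (d : Fin n → ℝ) (hd : ∀ i, d i = ∑ j, A i j) (hdpos : ∀ i, 0 < d i)
    (α : ℝ) (hα : α ∈ Set.Ioo (0 : ℝ) 1) (ρ : ℝ) (hρ : 0 < ρ)
    (s : Fin n → ℝ) (hs : ∀ i, 0 ≤ s i) (hs1 : ∑ i, s i = 1)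
    (hsρ : ∃ i, ρ ≤ |s i|)
    (Dinvhalf : Matrix (Fin n) (Fin n) ℝ)
    (hDinvhalf : Dinvhalf = Matrix.diagonal fun i => (Real.sqrt (d i))⁻¹)
    (Q : Matrix (Fin n) (Fin n) ℝ)
    (hQ : Q = α • (1 : Matrix (Fin n) (Fin n) ℝ) +
      ((1 - α) / 2) • ((1 : Matrix (Fin n) (Fin n) ℝ) - Dinvhalf * A * Dinvhalf))
    (g : (Fin n → ℝ) → (Fin n → ℝ))
    (hg : ∀ q, g q = Q.mulVec q - α • Dinvhalf.mulVec s)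
    (q : ℕ → Fin n → ℝ) (hq0 : q 0 = 0)
    (hupd : ∀ k i, q (k + 1) i =
      if ρ * α * Real.sqrt (d i) ≤ q k i - g (q k) i then
        q k i - g (q k) i - ρ * α * Real.sqrt (d i)
      else if q k i - g (q k) i ≤ -(ρ * α * Real.sqrt (d i)) then
        q k i - g (q k) i + ρ * α * Real.sqrt (d i)
      else 0)
    (S : ℕ → Set (Fin n))
    (hS : ∀ k, S k = {i : Fin n | ρ * α * Real.sqrt (d i) ≤ q k i - g (q k) i}) :
    ∀ k, S k ⊆ S (k + 1) ∧ (S k).ncard ≤ (S (k + 1)).ncard := by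
  obtain ⟨hα0, hα1⟩ := hα
  have hsqrt : ∀ i, 0 < Real.sqrt (d i) := fun i => Real.sqrt_pos.mpr (hdpos i)
  have hτ : ∀ i, 0 < ρ * α * Real.sqrt (d i) := fun i =>
    mul_pos (mul_pos hρ hα0) (hsqrt i)
  subst hDinvhalf
  -- Key formula: q - g q = ((1-α)/2)(q + M q) + α D^{-1/2} s  (all coefficients ≥ 0)
  have key : ∀ (p : Fin n → ℝ) (i : Fin n), p i - g p i =
      (1 - α) / 2 * (p i + ∑ j, (Real.sqrt (d i))⁻¹ * A i j * (Real.sqrt (d j))⁻¹ * p j)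
      + α * ((Real.sqrt (d i))⁻¹ * s i) := by
    intro p i
    have hM : (((Matrix.diagonal fun i => (Real.sqrt (d i))⁻¹) * A *
        (Matrix.diagonal fun i => (Real.sqrt (d i))⁻¹)).mulVec p) i =
        ∑ j, (Real.sqrt (d i))⁻¹ * A i j * (Real.sqrt (d j))⁻¹ * p j := by
      simp [Matrix.mulVec, dotProduct, Matrix.mul_diagonal,
        Matrix.diagonal_mul]
    rw [hg]
    simp only [Pi.sub_apply, Pi.smul_apply, hQ, Matrix.add_mulVec, Matrix.smul_mulVec,
      Matrix.one_mulVec, Matrix.sub_mulVec, Pi.add_apply, smul_eq_mul, hM,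
      Matrix.mulVec_diagonal]
    ring
  have hc : (0 : ℝ) ≤ (1 - α) / 2 := by linarith
  have hcoef : ∀ i j, 0 ≤ (Real.sqrt (d i))⁻¹ * A i j * (Real.sqrt (d j))⁻¹ := fun i j =>
    mul_nonneg (mul_nonneg (inv_nonneg.mpr (hsqrt i).le) (hAnn i j))
      (inv_nonneg.mpr (hsqrt j).le)
  -- Monotonicity of p ↦ p - g p
  have mono : ∀ p1 p2 : Fin n → ℝ, (∀ i, p1 i ≤ p2 i) →
      ∀ i, p1 i - g p1 i ≤ p2 i - g p2 i := by
    intro p1 p2 h i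
    rw [key, key]
    exact add_le_add_left (mul_le_mul_of_nonneg_left
      (add_le_add (h i) (Finset.sum_le_sum fun j _ =>
        mul_le_mul_of_nonneg_left (h j) (hcoef i j))) hc) _
  -- Nonnegativity of p - g p for p ≥ 0
  have nonneg : ∀ p : Fin n → ℝ, (∀ i, 0 ≤ p i) → ∀ i, 0 ≤ p i - g p i := by
    intro p h i
    rw [key]
    exact add_nonneg (mul_nonneg hc (add_nonneg (h i) (Finset.sum_nonneg fun j _ =>
      mul_nonneg (hcoef i j) (h j))))
      (mul_nonneg hα0.le (mul_nonneg (inv_nonneg.mpr (hsqrt i).le) (hs i)))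
  -- Invariant: q k ≥ 0 and q k ≤ q (k+1)
  have inv : ∀ k, (∀ i, 0 ≤ q k i) ∧ (∀ i, q k i ≤ q (k + 1) i) := by
    intro k
    induction k with
    | zero =>
      have h0 : ∀ i, 0 ≤ q 0 i := by simp [hq0]
      refine ⟨h0, fun i => ?_⟩
      have hu0 := nonneg _ h0 i
      have hq0i : q 0 i = 0 := by simp [hq0]
      rw [hupd 0 i]
      split_ifs <;> linarith [hτ i]
    | succ k ih =>
      obtain ⟨h0, hmono⟩ := ih
      have h0' : ∀ i, 0 ≤ q (k + 1) i := fun i => (h0 i).trans (hmono i)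
      refine ⟨h0', fun i => ?_⟩
      have hu := mono _ _ hmono i
      have hu0 := nonneg _ h0 i
      have hu1 := nonneg _ h0' i
      rw [hupd k i, hupd (k + 1) i]
      split_ifs <;> linarith [hτ i]
  intro k
  have hsub : S k ⊆ S (k + 1) := by
    rw [hS, hS]
    intro i hi
    exact le_trans hi (mono _ _ (inv k).2 i)
  exact ⟨hsub, Set.ncard_le_ncard hsub (Set.toFinite _)⟩
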